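/- The class of 1-counter languages is not closed under intersection: over the alphabet {a, b, c}, the languages D = { a^n b^n c^m : m, n ∈ ℕ } and E = { a^m b^n c^n : m, n ∈ ℕ } are both 1-counter, but D ∩ E = { a^n b^n c^n : n ∈ ℕ } is not 1-counter. -/

import Mathlib

structure ZkAut (A : Type) (k : ℕ) where
  n : ℕ
  start : Fin n
  accept : Fin n → Prop
  edges : List (Fin n × (Option A × (Fin k → ℤ)) × Fin n)

inductive ZkAut.Path {A : Type} {k : ℕ} (M : ZkAut A k) :
    Fin M.n → Fin M.n → List A → (Fin k → ℤ) → Prop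
  | nil (q : Fin M.n) : ZkAut.Path M q q [] 0
  | cons {p q r : Fin M.n} {x : Option A} {g : Fin k → ℤ} {w : List A} {h : Fin k → ℤ} :
      (p, (x, g), q) ∈ M.edges → ZkAut.Path M q r w h →
      ZkAut.Path M p r (x.toList ++ w) (g + h)

def ZkAut.Accepts {A : Type} {k : ℕ} (M : ZkAut A k) (w : List A) : Prop :=
  ∃ q : Fin M.n, M.accept q ∧ M.Path M.start q w 0

def IsCounterLang {A : Type} (k : ℕ) (L : Language A) : Prop :=
  ∃ M : ZkAut A k, ∀ w : List A, w ∈ L ↔ M.Accepts w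

namespace CtrAux

variable {A : Type} (M : ZkAut A 1)

abbrev Edge (M : ZkAut A 1) := Fin M.n × (Option A × (Fin 1 → ℤ)) × Fin M.n

/-- chain predicate -/
def Chain : Fin M.n → Fin M.n → List (Edge M) → Prop
  | p, q, [] => p = q
  | p, q, e :: L => e.1 = p ∧ e ∈ M.edges ∧ Chain e.2.2 q L

def wordOf (L : List (Edge M)) : List A := L.flatMap fun e => e.2.1.1.toList

def wtOf (L : List (Edge M)) : ℤ := (L.map fun e => e.2.1.2 0).sum

def states (p : Fin M.n) (L : List (Edge M)) : List (Fin M.n) := p :: L.map (fun e => e.2.2)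

variable {M}

@[simp] lemma wordOf_nil : wordOf M [] = [] := rfl
@[simp] lemma wordOf_cons (e : Edge M) (L) : wordOf M (e :: L) = e.2.1.1.toList ++ wordOf M L := rfl
@[simp] lemma wordOf_append (L₁ L₂ : List (Edge M)) :
    wordOf M (L₁ ++ L₂) = wordOf M L₁ ++ wordOf M L₂ := by simp [wordOf]
@[simp] lemma wtOf_nil : wtOf M [] = 0 := rfl
@[simp] lemma wtOf_cons (e : Edge M) (L) : wtOf M (e :: L) = e.2.1.2 0 + wtOf M L := rfl
@[simp] lemma wtOf_append (L₁ L₂ : List (Edge M)) :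
    wtOf M (L₁ ++ L₂) = wtOf M L₁ + wtOf M L₂ := by simp [wtOf]

lemma chain_append {p q r : Fin M.n} {L₁ L₂ : List (Edge M)}
    (h₁ : Chain M p q L₁) (h₂ : Chain M q r L₂) : Chain M p r (L₁ ++ L₂) := by
  induction L₁ generalizing p with
  | nil => subst h₁; exact h₂
  | cons e L ih => exact ⟨h₁.1, h₁.2.1, ih h₁.2.2⟩

lemma path_of_chain {p q : Fin M.n} {L : List (Edge M)} (h : Chain M p q L) :
    M.Path p q (wordOf M L) (fun _ => wtOf M L) := by
  induction L generalizing p with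
  | nil => subst h; simpa [wordOf, wtOf, Pi.zero_def] using ZkAut.Path.nil p
  | cons e L ih =>
      obtain ⟨h1, h2, h3⟩ := h
      have := ZkAut.Path.cons (M := M) (h1 ▸ h2 : (p, (e.2.1.1, e.2.1.2), e.2.2) ∈ M.edges) (ih h3)
      have hfun : (fun _ : Fin 1 => wtOf M (e :: L)) = e.2.1.2 + fun _ => wtOf M L := by
        funext i
        rw [Fin.eq_zero i, Pi.add_apply, wtOf_cons]
      rw [wordOf_cons, hfun]
      exact this

lemma chain_of_path {p q : Fin M.n} {w : List A} {g : Fin 1 → ℤ} (h : M.Path p q w g) :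
    ∃ L : List (Edge M), Chain M p q L ∧ wordOf M L = w ∧ wtOf M L = g 0 := by
  induction h with
  | nil q => exact ⟨[], rfl, rfl, rfl⟩
  | cons he _ ih =>
      obtain ⟨L, hc, hw, hg⟩ := ih
      exact ⟨_ :: L, ⟨rfl, he, hc⟩, by simp [hw], by simp [hg, Pi.add_apply]⟩

end CtrAux

namespace CtrAux

variable {A : Type} {M : ZkAut A 1}

/-- state after i steps -/
def stAt (M : ZkAut A 1) : Fin M.n → List (Edge M) → ℕ → Fin M.n
  | p, _, 0 => p
  | p, [], _ + 1 => p
  | _, e :: L, i + 1 => stAt M e.2.2 L i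

@[simp] lemma stAt_nil (p : Fin M.n) (i : ℕ) : stAt M p [] i = p := by
  cases i <;> rfl

lemma chain_take_drop {p q : Fin M.n} {L : List (Edge M)} (h : Chain M p q L) (i : ℕ) :
    Chain M p (stAt M p L i) (L.take i) ∧ Chain M (stAt M p L i) q (L.drop i) := by
  induction L generalizing p i with
  | nil =>
      subst h
      cases i <;> exact ⟨rfl, rfl⟩
  | cons e L ih =>
      obtain ⟨h1, h2, h3⟩ := h
      cases i with
      | zero => exact ⟨rfl, h1 ▸ ⟨rfl, h2, h3⟩⟩
      | succ i =>
          obtain ⟨ha, hb⟩ := ih h3 i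
          subst h1
          exact ⟨⟨rfl, h2, ha⟩, hb⟩

lemma stAt_drop {p : Fin M.n} (L : List (Edge M)) (i j : ℕ) (hij : i ≤ j) :
    stAt M (stAt M p L i) (L.drop i) (j - i) = stAt M p L j := by
  induction L generalizing p i j with
  | nil => simp
  | cons e L ih =>
      cases i with
      | zero => simp [stAt]
      | succ i =>
          cases j with
          | zero => omega
          | succ j => simpa [stAt, Nat.succ_sub_succ] using ih (p := e.2.2) i j (by omega)

/-- find a short cycle in a long chain -/
lemma find_cycle {p q : Fin M.n} {L : List (Edge M)} (h : Chain M p q L)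
    (hlen : M.n < L.length) :
    ∃ (L₁ B L₂ : List (Edge M)) (r : Fin M.n),
      L = L₁ ++ B ++ L₂ ∧ Chain M p r L₁ ∧ Chain M r r B ∧ Chain M r q L₂ ∧
      B ≠ [] ∧ B.length ≤ M.n := by
  have hn : 0 < M.n := Fin.pos p
  have hcard : Fintype.card (Fin M.n) < Fintype.card (Fin (M.n + 1)) := by simp
  obtain ⟨a, b, hab, hfab⟩ :=
    Fintype.exists_ne_map_eq_of_card_lt (fun i : Fin (M.n + 1) => stAt M p L i.1) hcard
  have hab' : a.1 ≠ b.1 := fun hh => hab (Fin.ext hh)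
  set i := min a.1 b.1 with hi
  set j := max a.1 b.1 with hj
  have hij : i < j := by omega
  have hjn : j ≤ M.n := by have := a.2; have := b.2; omega
  have hst : stAt M p L i = stAt M p L j := by
    rcases le_total a.1 b.1 with hc | hc
    · rw [hi, hj, min_eq_left hc, max_eq_right hc]; exact hfab
    · rw [hi, hj, min_eq_right hc, max_eq_left hc]; exact hfab.symm
  set r := stAt M p L i with hr
  obtain ⟨hc1, hc2⟩ := chain_take_drop h i
  obtain ⟨hc3, hc4⟩ := chain_take_drop hc2 (j - i)
  have hst2 : stAt M r (L.drop i) (j - i) = r := by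
    rw [stAt_drop L i j hij.le, ← hst]
  rw [hst2] at hc3 hc4
  have hdd : (L.drop i).drop (j - i) = L.drop j := by
    rw [List.drop_drop]; congr 1; omega
  rw [hdd] at hc4
  refine ⟨L.take i, (L.drop i).take (j - i), L.drop j, r, ?_, hc1, hc3, hc4, ?_, ?_⟩
  · rw [List.append_assoc, ← hdd, List.take_append_drop, List.take_append_drop]
  · have : ((L.drop i).take (j - i)).length = j - i := by
      rw [List.length_take, List.length_drop]; omega
    intro hnil
    rw [hnil] at this
    simp at this
    omega
  · have : ((L.drop i).take (j - i)).length ≤ j - i := by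
      simp [List.length_take]
    omega

end CtrAux

namespace CtrAux

variable {A : Type} {M : ZkAut A 1}

lemma mem_states_of_chain {p r : Fin M.n} {L : List (Edge M)} (h : Chain M p r L) :
    r ∈ states M p L := by
  induction L generalizing p with
  | nil => subst h; simp [states]
  | cons e L ih =>
      obtain ⟨h1, h2, h3⟩ := h
      have := ih h3
      simp only [states, List.map_cons, List.mem_cons] at this ⊢
      tauto

lemma states_prefix_subset {p : Fin M.n} (L₁ L₂ : List (Edge M)) {x : Fin M.n}
    (h : x ∈ states M p L₁) : x ∈ states M p (L₁ ++ L₂) := by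
  simp only [states, List.map_append, List.mem_cons, List.mem_append] at h ⊢
  tauto

lemma states_mid_subset {p : Fin M.n} (L₁ B L₂ : List (Edge M)) {x : Fin M.n}
    (h : x ∈ states M p (L₁ ++ L₂)) : x ∈ states M p (L₁ ++ B ++ L₂) := by
  simp only [states, List.map_append, List.mem_cons, List.mem_append] at h ⊢
  tauto

lemma reduce : ∀ (k : ℕ) (L : List (Edge M)), L.length ≤ k → ∀ p q, Chain M p q L →
    ∃ (L' : List (Edge M)) (CS : List (Fin M.n × List (Edge M))),
      Chain M p q L' ∧ L'.length ≤ M.n ∧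
      (∀ c ∈ CS, c.1 ∈ states M p L ∧ Chain M c.1 c.1 c.2 ∧ c.2 ≠ [] ∧ c.2.length ≤ M.n) ∧
      wtOf M L = wtOf M L' + (CS.map fun c => wtOf M c.2).sum ∧
      (wordOf M L).length
        = (wordOf M L').length + (CS.map fun c => (wordOf M c.2).length).sum := by
  intro k
  induction k with
  | zero =>
      intro L hL p q h
      have hnil : L = [] := List.length_eq_zero_iff.mp (Nat.le_zero.mp hL)
      subst hnil
      exact ⟨[], [], h, by simp, by simp, by simp, by simp⟩
  | succ k ih =>
      intro L hL p q h
      by_cases hle : L.length ≤ M.n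
      · exact ⟨L, [], h, hle, by simp, by simp, by simp⟩
      · push_neg at hle
        obtain ⟨L₁, B, L₂, r, hdec, hc1, hcB, hc2, hBne, hBlen⟩ := find_cycle h hle
        have hLlen : L.length = L₁.length + B.length + L₂.length := by
          rw [hdec]; simp only [List.length_append]
        have hBpos : 1 ≤ B.length := List.length_pos_iff.mpr hBne
        have hlen12 : (L₁ ++ L₂).length ≤ k := by
          simp only [List.length_append]; omega
        obtain ⟨L', CS, hc', hlen', hCS, hwt, hwd⟩ := ih (L₁ ++ L₂) hlen12 p q
          (chain_append hc1 hc2)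
        have hrmem : r ∈ states M p L := by
          rw [hdec, List.append_assoc]
          exact states_prefix_subset L₁ (B ++ L₂) (mem_states_of_chain hc1)
        refine ⟨L', (r, B) :: CS, hc', hlen', ?_, ?_, ?_⟩
        · intro c hc
          rcases List.mem_cons.mp hc with hc | hc
          · subst hc
            exact ⟨hrmem, hcB, hBne, hBlen⟩
          · obtain ⟨hs, rest⟩ := hCS c hc
            exact ⟨hdec ▸ states_mid_subset L₁ B L₂ hs, rest⟩
        · rw [hdec, List.map_cons, List.sum_cons]
          simp only [wtOf_append] at hwt ⊢
          omega
        · rw [hdec, List.map_cons, List.sum_cons]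
          simp only [wordOf_append, List.length_append] at hwd ⊢
          omega

end CtrAux

namespace CtrAux

open List in
lemma _sublist_test (l r : List ℕ) : l <+ l ++ r := List.sublist_append_left l r

variable {A : Type} {M : ZkAut A 1}

open List

/-- t-fold repetition of a list -/
def wpow (t : ℕ) (u : List A) : List A := (List.replicate t u).flatten

@[simp] lemma wpow_zero (u : List A) : wpow 0 u = [] := rfl
@[simp] lemma wpow_succ (t : ℕ) (u : List A) : wpow (t + 1) u = u ++ wpow t u := by
  simp [wpow, List.replicate_succ]

lemma count_wpow (t : ℕ) (u : List A) [DecidableEq A] (ℓ : A) :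
    (wpow t u).count ℓ = t * u.count ℓ := by
  induction t with
  | zero => simp
  | succ t ih => simp [ih]; ring

lemma length_wpow (t : ℕ) (u : List A) : (wpow t u).length = t * u.length := by
  induction t with
  | zero => simp
  | succ t ih => simp [ih]; ring

lemma doubled_sublist_wpow {t : ℕ} (ht : 2 ≤ t) (u : List A) : u ++ u <+ wpow t u := by
  obtain ⟨s, rfl⟩ : ∃ s, t = s + 2 := ⟨t - 2, by omega⟩
  rw [show s + 2 = (s + 1) + 1 by ring, wpow_succ, wpow_succ]
  exact (List.sublist_append_left u (wpow s u)).append_left u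

def cyc (t : ℕ) (C : List (Edge M)) : List (Edge M) := (List.replicate t C).flatten

@[simp] lemma cyc_zero (C : List (Edge M)) : cyc 0 C = [] := rfl
@[simp] lemma cyc_succ (t : ℕ) (C : List (Edge M)) : cyc (t + 1) C = C ++ cyc t C := by
  simp [cyc, List.replicate_succ]

lemma chain_cyc {r : Fin M.n} {C : List (Edge M)} (hC : Chain M r r C) (t : ℕ) :
    Chain M r r (cyc t C) := by
  induction t with
  | zero => rfl
  | succ t ih => rw [cyc_succ]; exact chain_append hC ih

lemma wordOf_cyc (t : ℕ) (C : List (Edge M)) : wordOf M (cyc t C) = wpow t (wordOf M C) := by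
  induction t with
  | zero => rfl
  | succ t ih => simp [ih]

lemma wtOf_cyc (t : ℕ) (C : List (Edge M)) : wtOf M (cyc t C) = t * wtOf M C := by
  induction t with
  | zero => simp
  | succ t ih => simp [ih]; ring

lemma chain_split_at {p q r : Fin M.n} {L : List (Edge M)} (hL : Chain M p q L)
    (hr : r ∈ states M p L) : ∃ L₁ L₂, L = L₁ ++ L₂ ∧ Chain M p r L₁ ∧ Chain M r q L₂ := by
  induction L generalizing p with
  | nil =>
      subst hL
      simp [states] at hr
      exact ⟨[], [], rfl, hr.symm, hr⟩
  | cons e L ih =>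
      obtain ⟨h1, h2, h3⟩ := hL
      by_cases hrp : r = p
      · exact ⟨[], e :: L, rfl, hrp.symm, hrp ▸ ⟨h1, h2, h3⟩⟩
      · have hr' : r ∈ states M e.2.2 L := by
          simp only [states, List.map_cons, List.mem_cons] at hr ⊢
          tauto
        obtain ⟨L₁, L₂, hdec, ha, hb⟩ := ih h3 hr'
        exact ⟨e :: L₁, L₂, by rw [hdec]; rfl, ⟨h1, h2, ha⟩, hb⟩

lemma insert_cycle [DecidableEq A] {p q r : Fin M.n} {L C : List (Edge M)}
    (hL : Chain M p q L) (hr : r ∈ states M p L) (hC : Chain M r r C) (t : ℕ) :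
    ∃ L'' : List (Edge M), Chain M p q L'' ∧
      wtOf M L'' = wtOf M L + t * wtOf M C ∧
      (∀ ℓ, (wordOf M L'').count ℓ = (wordOf M L).count ℓ + t * (wordOf M C).count ℓ) ∧
      (wordOf M L'').length = (wordOf M L).length + t * (wordOf M C).length ∧
      wordOf M L <+ wordOf M L'' ∧
      (2 ≤ t → wordOf M C ++ wordOf M C <+ wordOf M L'') ∧
      (∀ x, x ∈ states M p L → x ∈ states M p L'') := by
  obtain ⟨L₁, L₂, rfl, h1, h2⟩ := chain_split_at hL hr
  refine ⟨L₁ ++ (cyc t C ++ L₂), ?_, ?_, ?_, ?_, ?_, ?_, ?_⟩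
  · exact chain_append h1 (chain_append (chain_cyc hC t) h2)
  · simp [wtOf_cyc]; ring
  · intro ℓ
    simp [wordOf_cyc, count_wpow]; ring
  · simp [wordOf_cyc, length_wpow]; ring
  · simp only [wordOf_append]
    exact ((List.sublist_append_right (wordOf M (cyc t C)) (wordOf M L₂)).append_left
        (wordOf M L₁)).trans (by simp [List.append_assoc])
  · intro ht
    simp only [wordOf_append, wordOf_cyc]
    refine ((doubled_sublist_wpow ht (wordOf M C)).trans ?_)
    exact ((List.sublist_append_left (wpow t (wordOf M C)) (wordOf M L₂)).trans
      (List.sublist_append_right (wordOf M L₁) _)).trans (by simp [List.append_assoc])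
  · intro x hx
    have := states_mid_subset L₁ (cyc t C) L₂ hx
    rwa [List.append_assoc] at this

end CtrAux

namespace CtrAux
open List

def R (N : ℕ) : List (Fin 3) :=
  List.replicate N 0 ++ List.replicate N 1 ++ List.replicate N 2

lemma sorted_R (N : ℕ) : (R N).Pairwise (· ≤ ·) := by
  unfold R
  refine List.pairwise_append.mpr ⟨List.pairwise_append.mpr ⟨?_, ?_, ?_⟩, ?_, ?_⟩
  · exact List.pairwise_replicate.mpr (Or.inr le_rfl)
  · exact List.pairwise_replicate.mpr (Or.inr le_rfl)
  · intro x hx y hy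
    rw [List.eq_of_mem_replicate hx, List.eq_of_mem_replicate hy]
    decide
  · exact List.pairwise_replicate.mpr (Or.inr le_rfl)
  · intro x hx y hy
    rw [List.eq_of_mem_replicate hy]
    rcases List.mem_append.mp hx with h | h <;>
      rw [List.eq_of_mem_replicate h] <;> decide

lemma descent_not_R {w : List (Fin 3)} {x y : Fin 3} (h : [x, y] <+ w) (hxy : y < x)
    (N : ℕ) (hw : w = R N) : False := by
  subst hw
  have := (sorted_R N).sublist h
  simp at this
  omega

lemma count_R (ℓ : Fin 3) (N : ℕ) : (R N).count ℓ = N := by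
  fin_cases ℓ <;> simp [R, List.count_replicate, List.count_append]

lemma length_R (N : ℕ) : (R N).length = 3 * N := by
  simp [R]; ring

lemma third_letter : ∀ a b : Fin 3, ∃ c : Fin 3, c ≠ a ∧ c ≠ b := by decide

lemma const_or_two {α : Type} (u : List α) :
    (∃ x ∈ u, ∃ y ∈ u, x ≠ y) ∨ (∀ x ∈ u, ∀ y ∈ u, x = y) := by
  by_cases h : ∃ x ∈ u, ∃ y ∈ u, x ≠ y
  · exact Or.inl h
  · push_neg at h
    exact Or.inr h

lemma pumped_not_R {w u v : List (Fin 3)} {t t' N : ℕ}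
    (hu : u ≠ []) (ht : 2 ≤ t)
    (hcount : ∀ ℓ, w.count ℓ = (R N).count ℓ + t * u.count ℓ + t' * v.count ℓ)
    (hlen : w.length = (R N).length + t * u.length + t' * v.length)
    (hdu : u ++ u <+ w)
    (hdv : v ≠ [] → 2 ≤ t' → v ++ v <+ w)
    (hv' : v = [] ∨ 2 ≤ t')
    (M' : ℕ) (hw : w = R M') : False := by
  have descent : ∀ z : List (Fin 3), z ++ z <+ w → (∃ x ∈ z, ∃ y ∈ z, x ≠ y) → False := by
    rintro z hz ⟨x, hx, y, hy, hne⟩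
    rcases lt_or_gt_of_ne hne with hlt | hlt
    · exact descent_not_R (((List.singleton_sublist.mpr hy).append
        (List.singleton_sublist.mpr hx)).trans hz) hlt M' hw
    · exact descent_not_R (((List.singleton_sublist.mpr hx).append
        (List.singleton_sublist.mpr hy)).trans hz) hlt M' hw
  rcases const_or_two u with h2 | hconst
  · exact descent u hdu h2
  -- u is constant, nonempty
  obtain ⟨ℓu, hℓu⟩ : ∃ ℓu, ∀ x ∈ u, x = ℓu := by
    cases u with
    | nil => exact absurd rfl hu
    | cons a u' => exact ⟨a, fun x hx => hconst x hx a List.mem_cons_self⟩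
  by_cases hvne : v = []
  · -- single letter pumped; third-count argument with ℓv := ℓu
    obtain ⟨m, hm1, hm2⟩ := third_letter ℓu ℓu
    have hcm : w.count m = N := by
      have := hcount m
      rw [count_R] at this
      have hcu : u.count m = 0 := by
        rw [List.count_eq_zero]
        intro hmem; exact hm1 (hℓu m hmem)
      rw [hcu, hvne] at this
      simpa using this
    have hlw : w.length = 3 * N + t * u.length + t' * v.length := by
      rw [hlen, length_R]
    have hup : 1 ≤ u.length := List.length_pos_iff.mpr hu
    have hMN : M' = N := by
      rw [hw, count_R] at hcm; omega
    have hlen3 : w.length = 3 * M' := by rw [hw, length_R]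
    have h2lu : 2 * 1 ≤ t * u.length := Nat.mul_le_mul ht hup
    omega
  · rcases const_or_two v with h2 | hconstv
    · have ht' : 2 ≤ t' := by tauto
      exact descent v (hdv hvne ht') h2
    · obtain ⟨ℓv, hℓv⟩ : ∃ ℓv, ∀ x ∈ v, x = ℓv := by
        cases v with
        | nil => exact absurd rfl hvne
        | cons a v' => exact ⟨a, fun x hx => hconstv x hx a List.mem_cons_self⟩
      obtain ⟨m, hm1, hm2⟩ := third_letter ℓu ℓv
      have hcm : w.count m = N := by
        have := hcount m
        rw [count_R] at this
        have hcu : u.count m = 0 := by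
          rw [List.count_eq_zero]; intro hmem; exact hm1 (hℓu m hmem)
        have hcv : v.count m = 0 := by
          rw [List.count_eq_zero]; intro hmem; exact hm2 (hℓv m hmem)
        rw [hcu, hcv] at this
        simpa using this
      have hup : 1 ≤ u.length := List.length_pos_iff.mpr hu
      have hMN : M' = N := by
        rw [hw, count_R] at hcm; omega
      have hlen3 : w.length = 3 * M' := by rw [hw, length_R]
      have hlw : w.length = 3 * N + t * u.length + t' * v.length := by
        rw [hlen, length_R]
      have h2lu : 2 * 1 ≤ t * u.length := Nat.mul_le_mul ht hup
      omega

end CtrAux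

namespace CtrAux
open List

variable {A : Type} {M : ZkAut A 1}

def Bnd (M : ZkAut A 1) : ℤ := (M.edges.map fun e => |e.2.1.2 0|).sum

lemma Bnd_nonneg (M : ZkAut A 1) : 0 ≤ Bnd M :=
  List.sum_nonneg (by simp only [List.mem_map]; rintro x ⟨e, _, rfl⟩; exact abs_nonneg _)

lemma edge_wt_le {e : Edge M} (he : e ∈ M.edges) : |e.2.1.2 0| ≤ Bnd M :=
  List.single_le_sum (by simp only [List.mem_map]; rintro x ⟨e', _, rfl⟩; exact abs_nonneg _) _
    (List.mem_map_of_mem he)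

lemma wt_chain_bound {p q : Fin M.n} {L : List (Edge M)} (h : Chain M p q L) :
    |wtOf M L| ≤ L.length * Bnd M := by
  induction L generalizing p with
  | nil => simp
  | cons e L ih =>
      obtain ⟨h1, h2, h3⟩ := h
      have := ih h3
      have hb := edge_wt_le h2
      calc |wtOf M (e :: L)| ≤ |e.2.1.2 0| + |wtOf M L| := by
              rw [wtOf_cons]; exact abs_add_le _ _
        _ ≤ Bnd M + L.length * Bnd M := add_le_add hb this
        _ = (e :: L).length * Bnd M := by simp [List.length_cons]; ring

lemma wordlen_le_chainlen (L : List (Edge M)) : (wordOf M L).length ≤ L.length := by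
  induction L with
  | nil => simp
  | cons e L ih =>
      rw [wordOf_cons, List.length_append]
      have : e.2.1.1.toList.length ≤ 1 := by cases e.2.1.1 <;> simp
      simp only [List.length_cons]
      omega

lemma cast_sum_map {α : Type*} (CS : List α) (f : α → ℕ) :
    ((CS.map f).sum : ℤ) = (CS.map fun c => (f c : ℤ)).sum := by
  induction CS <;> simp_all

lemma sum_map_mul_left' {α : Type*} (CS : List α) (f : α → ℤ) (k : ℤ) :
    (CS.map fun c => k * f c).sum = k * (CS.map f).sum := by
  induction CS <;> simp_all [mul_add]

lemma sum_map_mul_left2 {α : Type*} (CS : List α) (f : α → ℤ) (k m : ℤ) :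
    (CS.map fun c => k * (m * f c)).sum = k * (m * (CS.map f).sum) := by
  induction CS <;> simp_all [mul_add]

set_option maxHeartbeats 1000000 in
theorem main_neg : ¬ IsCounterLang 1
    ({w | ∃ n : ℕ, w = List.replicate n 0 ++ List.replicate n 1 ++ List.replicate n 2} :
      Language (Fin 3)) := by
  rintro ⟨M, hM⟩
  set s : ℕ := M.n with hs
  set B : ℤ := Bnd M with hB
  have hB0 : 0 ≤ B := Bnd_nonneg M
  set N : ℕ := s * s * B.toNat + s + 1 with hN
  -- R N is accepted
  have hmem : (R N) ∈ {w : List (Fin 3) | ∃ n : ℕ,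
      w = List.replicate n 0 ++ List.replicate n 1 ++ List.replicate n 2} := ⟨N, rfl⟩
  obtain ⟨qf, hacc, hpath⟩ := (hM _).mp hmem
  obtain ⟨L₀, hchain, hword, hwt⟩ := chain_of_path hpath
  have hwt0 : wtOf M L₀ = 0 := by rw [hwt]; rfl
  -- helper : accepted pumped chains give words of the form R M'
  have key : ∀ L'' : List (Edge M), Chain M M.start qf L'' → wtOf M L'' = 0 →
      ∃ M' : ℕ, wordOf M L'' = R M' := by
    intro L'' hc hw
    have hp := path_of_chain hc
    rw [hw] at hp
    have : (fun _ : Fin 1 => (0 : ℤ)) = (0 : Fin 1 → ℤ) := by funext; rfl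
    rw [this] at hp
    obtain ⟨M', hM'⟩ := (hM _).mpr ⟨qf, hacc, hp⟩
    exact ⟨M', hM'⟩
  -- reduce
  obtain ⟨L', CS, hcL', hlenL', hCS, hwtsum, hwdsum⟩ :=
    reduce L₀.length L₀ le_rfl M.start qf hchain
  rw [hwt0] at hwtsum
  rw [hword, length_R] at hwdsum
  have hwl' : (wordOf M L').length ≤ s := (wordlen_le_chainlen L').trans hlenL'
  -- there is a cycle with a nonempty word
  have hNbig : s < 3 * N := by
    have : 0 ≤ s * s * B.toNat := Nat.zero_le _
    omega
  have hexu : ∃ c ∈ CS, wordOf M c.2 ≠ [] := by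
    by_contra hno
    push_neg at hno
    have : (CS.map fun c => (wordOf M c.2).length).sum = 0 := by
      rw [List.sum_eq_zero]
      intro x hx
      simp only [List.mem_map] at hx
      obtain ⟨c, hc, rfl⟩ := hx
      rw [hno c hc]; rfl
    omega
  by_cases hzero : ∃ c ∈ CS, wordOf M c.2 ≠ [] ∧ wtOf M c.2 = 0
  · -- case (a): a zero-weight letter cycle; pump it twice
    obtain ⟨c, hcCS, hcw, hcz⟩ := hzero
    obtain ⟨hcs, hcchain, hcne, hclen⟩ := hCS c hcCS
    obtain ⟨L'', hc'', hwt'', hcount'', hlen'', hsub'', hdbl'', hst''⟩ :=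
      insert_cycle hchain hcs hcchain 2
    have hz'' : wtOf M L'' = 0 := by rw [hwt'', hwt0, hcz]; ring
    obtain ⟨M', hM'⟩ := key L'' hc'' hz''
    refine pumped_not_R (N := N) (u := wordOf M c.2) (v := ([] : List (Fin 3))) (t := 2) (t' := 0)
      hcw le_rfl ?_ ?_ (hdbl'' le_rfl) (fun h => absurd rfl h) (Or.inl rfl) M' hM'
    · intro ℓ
      rw [hcount'' ℓ, hword]
      simp
    · rw [hlen'', hword]
      simp
  · push_neg at hzero
    obtain ⟨c₀, hc₀CS, hc₀w⟩ := hexu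
    obtain ⟨hc₀s, hc₀chain, hc₀ne, hc₀len⟩ := hCS c₀ hc₀CS
    set d₀ : ℤ := wtOf M c₀.2 with hd₀def
    have hd₀ : d₀ ≠ 0 := hzero c₀ hc₀CS hc₀w
    by_cases hopp : ∃ c' ∈ CS, wtOf M c'.2 * d₀ < 0
    · -- case (b): two cycles of opposite signs; pump both
      obtain ⟨c', hc'CS, hlt⟩ := hopp
      obtain ⟨hc's, hc'chain, hc'ne, hc'len⟩ := hCS c' hc'CS
      set d' : ℤ := wtOf M c'.2 with hd'def
      have hd' : d' ≠ 0 := by rintro h; rw [h] at hlt; simp at hlt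
      set t : ℕ := 2 * d'.natAbs with htdef
      set t' : ℕ := 2 * d₀.natAbs with ht'def
      have ht2 : 2 ≤ t := by
        have : d'.natAbs ≠ 0 := Int.natAbs_ne_zero.mpr hd'
        omega
      have ht'2 : 2 ≤ t' := by
        have : d₀.natAbs ≠ 0 := Int.natAbs_ne_zero.mpr hd₀
        omega
      obtain ⟨L₁, hc₁, hwt₁, hcount₁, hlen₁, hsub₁, hdbl₁, hst₁⟩ :=
        insert_cycle hchain hc₀s hc₀chain t
      obtain ⟨L₂, hc₂, hwt₂, hcount₂, hlen₂, hsub₂, hdbl₂, hst₂⟩ :=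
        insert_cycle hc₁ (hst₁ _ hc's) hc'chain t'
      have hcancel : (t : ℤ) * d₀ + (t' : ℤ) * d' = 0 := by
        have habs0 : ((d₀.natAbs : ℤ)) = |d₀| := Int.natCast_natAbs d₀
        have habs' : ((d'.natAbs : ℤ)) = |d'| := Int.natCast_natAbs d'
        have hcast : (t : ℤ) = 2 * |d'| := by rw [htdef]; push_cast [habs']; ring
        have hcast' : (t' : ℤ) = 2 * |d₀| := by rw [ht'def]; push_cast [habs0]; ring
        rw [hcast, hcast']
        by_cases h0 : 0 < d₀
        · have hd'neg : d' < 0 := by nlinarith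
          rw [abs_of_pos h0, abs_of_neg hd'neg]; ring
        · have h0' : d₀ < 0 := lt_of_le_of_ne (not_lt.mp h0) hd₀
          have hd'pos : 0 < d' := by nlinarith
          rw [abs_of_neg h0', abs_of_pos hd'pos]; ring
      have hz₂ : wtOf M L₂ = 0 := by
        rw [hwt₂, hwt₁, hwt0]
        linarith [hcancel]
      obtain ⟨M', hM'⟩ := key L₂ hc₂ hz₂
      refine pumped_not_R (N := N) (u := wordOf M c₀.2) (v := wordOf M c'.2)
        (t := t) (t' := t') hc₀w ht2 ?_ ?_ ((hdbl₁ ht2).trans hsub₂)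
        (fun _ _ => hdbl₂ ht'2) (Or.inr ht'2) M' hM'
      · intro ℓ
        rw [hcount₂ ℓ, hcount₁ ℓ, hword]
      · rw [hlen₂, hlen₁, hword]
    · -- case (d): all cycle weights have the same sign; counting contradiction
      push_neg at hopp
      set σ : ℤ := if 0 < d₀ then 1 else -1 with hσdef
      have hσ : σ = 1 ∨ σ = -1 := by
        by_cases h0 : 0 < d₀ <;> simp [hσdef, h0]
      have hσne : σ ≠ 0 := by rcases hσ with h | h <;> rw [h] <;> decide
      have hσwt : ∀ c ∈ CS, 0 ≤ σ * wtOf M c.2 := by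
        intro c hc
        have hp := hopp c hc
        by_cases h0 : 0 < d₀
        · simp only [hσdef, if_pos h0]
          nlinarith
        · have h0' : d₀ < 0 := lt_of_le_of_ne (not_lt.mp h0) hd₀
          simp only [hσdef, if_neg h0]
          nlinarith
      have hσwt1 : ∀ c ∈ CS, wordOf M c.2 ≠ [] → 1 ≤ σ * wtOf M c.2 := by
        intro c hc hw
        have h1 := hσwt c hc
        have h2 : σ * wtOf M c.2 ≠ 0 := mul_ne_zero hσne (hzero c hc hw)
        omega
      have hclaim : ∀ c ∈ CS, ((wordOf M c.2).length : ℤ) ≤ (s : ℤ) * (σ * wtOf M c.2) := by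
        intro c hc
        obtain ⟨_, _, hcne, hclen⟩ := hCS c hc
        by_cases hwne : wordOf M c.2 = []
        · rw [hwne]
          simp only [List.length_nil, Nat.cast_zero]
          exact mul_nonneg (by positivity) (hσwt c hc)
        · have h1 := hσwt1 c hc hwne
          have hle : ((wordOf M c.2).length : ℤ) ≤ (s : ℤ) := by
            exact_mod_cast (wordlen_le_chainlen c.2).trans hclen
          nlinarith
      have hsum1 : (((CS.map fun c => (wordOf M c.2).length).sum : ℕ) : ℤ)
          ≤ (s : ℤ) * (σ * (CS.map fun c => wtOf M c.2).sum) := by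
        rw [cast_sum_map]
        calc (CS.map fun c => ((wordOf M c.2).length : ℤ)).sum
            ≤ (CS.map fun c => (s : ℤ) * (σ * wtOf M c.2)).sum := by
              apply List.sum_le_sum
              intro c hc
              exact hclaim c hc
          _ = (s : ℤ) * (σ * (CS.map fun c => wtOf M c.2).sum) :=
              sum_map_mul_left2 CS (fun c => wtOf M c.2) (s : ℤ) σ
      have hSwt : (CS.map fun c => wtOf M c.2).sum = - wtOf M L' := by linarith [hwtsum]
      have hbnd : |wtOf M L'| ≤ (s : ℤ) * B := by
        have h1 := wt_chain_bound hcL'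
        have h2 : (L'.length : ℤ) * B ≤ (s : ℤ) * B := by
          apply mul_le_mul_of_nonneg_right _ hB0
          exact_mod_cast hlenL'
        linarith
      have hσb : σ * (CS.map fun c => wtOf M c.2).sum ≤ (s : ℤ) * B := by
        rw [hSwt]
        rcases hσ with h | h <;> rw [h] <;>
          [skip; skip] <;> cases abs_cases (wtOf M L') <;> linarith
      have hwl'z : ((wordOf M L').length : ℤ) ≤ (s : ℤ) := by exact_mod_cast hwl'
      have hNcast : (N : ℤ) = (s : ℤ) * (s : ℤ) * B + (s : ℤ) + 1 := by
        rw [hN]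
        push_cast [Int.toNat_of_nonneg hB0]
        ring
      have hsum0 : (3 : ℤ) * (N : ℤ)
          = ((wordOf M L').length : ℤ)
            + (((CS.map fun c => (wordOf M c.2).length).sum : ℕ) : ℤ) := by
        exact_mod_cast congrArg (Nat.cast : ℕ → ℤ) hwdsum
      have hs0 : (0 : ℤ) ≤ (s : ℤ) := by positivity
      have h1 : (((CS.map fun c => (wordOf M c.2).length).sum : ℕ) : ℤ)
          ≤ (s : ℤ) * ((s : ℤ) * B) := by
        calc (((CS.map fun c => (wordOf M c.2).length).sum : ℕ) : ℤ)
            ≤ (s : ℤ) * (σ * (CS.map fun c => wtOf M c.2).sum) := hsum1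
          _ ≤ (s : ℤ) * ((s : ℤ) * B) := mul_le_mul_of_nonneg_left hσb hs0
      have hfin : (3 : ℤ) * ((s : ℤ) * (s : ℤ) * B + (s : ℤ) + 1)
          ≤ (s : ℤ) + (s : ℤ) * ((s : ℤ) * B) := by
        rw [← hNcast]
        linarith [hsum0, hwl'z, h1]
      nlinarith [mul_nonneg (mul_nonneg hs0 hs0) hB0, hs0, hB0]

end CtrAux

namespace CtrAux
open List

lemma path_append {A : Type} {k : ℕ} {M : ZkAut A k} {p q r : Fin M.n}
    {w w' : List A} {g g' : Fin k → ℤ} (h₁ : M.Path p q w g) (h₂ : M.Path q r w' g') :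
    M.Path p r (w ++ w') (g + g') := by
  induction h₁ with
  | nil => simpa using h₂
  | cons he _ ih =>
      rw [List.append_assoc, add_assoc]
      exact ZkAut.Path.cons he (ih h₂)

lemma path_loop {A : Type} {M : ZkAut A 1} {p : Fin M.n} {a : A} {z : ℤ}
    (h : (p, (some a, fun _ => z), p) ∈ M.edges) (k : ℕ) :
    M.Path p p (List.replicate k a) (fun _ => (k : ℤ) * z) := by
  induction k with
  | zero => simpa [Pi.zero_def] using ZkAut.Path.nil p
  | succ k ih =>
      have := ZkAut.Path.cons h ih
      convert this using 2
      all_goals first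
        | (simp only [Pi.add_apply]; push_cast; ring)
        | simp [List.replicate_succ]

/-- automaton for D = { a^n b^n c^m } -/
def MD : ZkAut (Fin 3) 1 where
  n := 3
  start := 0
  accept := fun _ => True
  edges := [ (0, (some 0, fun _ => 1), 0),
             (0, (some 1, fun _ => -1), 1),
             (1, (some 1, fun _ => -1), 1),
             (0, (some 2, fun _ => 0), 2),
             (1, (some 2, fun _ => 0), 2),
             (2, (some 2, fun _ => 0), 2) ]

/-- automaton for E = { a^m b^n c^n } -/
def ME : ZkAut (Fin 3) 1 where
  n := 3
  start := 0
  accept := fun _ => True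
  edges := [ (0, (some 0, fun _ => 0), 0),
             (0, (some 1, fun _ => 1), 1),
             (1, (some 1, fun _ => 1), 1),
             (0, (some 2, fun _ => -1), 2),
             (1, (some 2, fun _ => -1), 2),
             (2, (some 2, fun _ => -1), 2) ]

def InvD : Fin 3 → Fin 3 → List (Fin 3) → (Fin 1 → ℤ) → Prop := fun p q w g =>
  (p = 0 ∧ q = 0 ∧ ∃ n : ℕ, w = List.replicate n 0 ∧ g 0 = n) ∨
  (p = 0 ∧ q = 1 ∧ ∃ n m : ℕ, 1 ≤ m ∧ w = List.replicate n 0 ++ List.replicate m 1 ∧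
    g 0 = (n : ℤ) - m) ∨
  (p = 0 ∧ q = 2 ∧ ∃ n m k : ℕ, 1 ≤ k ∧
    w = List.replicate n 0 ++ List.replicate m 1 ++ List.replicate k 2 ∧ g 0 = (n : ℤ) - m) ∨
  (p = 1 ∧ q = 1 ∧ ∃ m : ℕ, w = List.replicate m 1 ∧ g 0 = -(m : ℤ)) ∨
  (p = 1 ∧ q = 2 ∧ ∃ m k : ℕ, 1 ≤ k ∧ w = List.replicate m 1 ++ List.replicate k 2 ∧
    g 0 = -(m : ℤ)) ∨
  (p = 2 ∧ q = 2 ∧ ∃ k : ℕ, w = List.replicate k 2 ∧ g 0 = 0)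

lemma MD_inv {p q : Fin MD.n} {w : List (Fin 3)} {g : Fin 1 → ℤ} (h : MD.Path p q w g) :
    InvD p q w g := by
  induction h with
  | nil q =>
      fin_cases q
      · exact Or.inl ⟨rfl, rfl, 0, rfl, by simp⟩
      · exact Or.inr (Or.inr (Or.inr (Or.inl ⟨rfl, rfl, 0, rfl, by simp⟩)))
      · exact Or.inr (Or.inr (Or.inr (Or.inr (Or.inr ⟨rfl, rfl, 0, rfl, by simp⟩))))
  | @cons p q r x gE w h he ht ih =>
      unfold MD at he
      simp only [List.mem_cons, List.not_mem_nil, or_false, Prod.mk.injEq, Prod.ext_iff] at he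
      rcases he with ⟨hp, ⟨hx, hg⟩, hq⟩ | ⟨hp, ⟨hx, hg⟩, hq⟩ | ⟨hp, ⟨hx, hg⟩, hq⟩ |
        ⟨hp, ⟨hx, hg⟩, hq⟩ | ⟨hp, ⟨hx, hg⟩, hq⟩ | ⟨hp, ⟨hx, hg⟩, hq⟩ <;>
          subst hp <;> subst hx <;> subst hq <;>
          rcases ih with ⟨hP, hQ, rest⟩ | ⟨hP, hQ, rest⟩ | ⟨hP, hQ, rest⟩ | ⟨hP, hQ, rest⟩ |
            ⟨hP, hQ, rest⟩ | ⟨hP, hQ, rest⟩ <;> first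
            | (exact absurd hP (by decide))
            | skip
      · obtain ⟨n, hw, hgv⟩ := rest
        exact Or.inl ⟨rfl, hQ, n + 1, by simp [hw, List.replicate_succ],
          by simp [Pi.add_apply, hg, hgv]; try push_cast; try ring⟩
      · obtain ⟨n, m, hm, hw, hgv⟩ := rest
        refine Or.inr (Or.inl ⟨rfl, hQ, n + 1, m, hm, by simp [hw, List.replicate_succ], ?_⟩)
        simp [Pi.add_apply, hg, hgv]; try push_cast; try ring
      · obtain ⟨n, m, k, hk, hw, hgv⟩ := rest
        refine Or.inr (Or.inr (Or.inl ⟨rfl, hQ, n + 1, m, k, hk,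
          by simp [hw, List.replicate_succ], ?_⟩))
        simp [Pi.add_apply, hg, hgv]; try push_cast; try ring
      · obtain ⟨m, hw, hgv⟩ := rest
        refine Or.inr (Or.inl ⟨rfl, hQ, 0, m + 1, by omega,
          by simp [hw, List.replicate_succ], ?_⟩)
        simp [Pi.add_apply, hg, hgv]; try push_cast; try ring
      · obtain ⟨m, k, hk, hw, hgv⟩ := rest
        refine Or.inr (Or.inr (Or.inl ⟨rfl, hQ, 0, m + 1, k, hk,
          by simp [hw, List.replicate_succ], ?_⟩))
        simp [Pi.add_apply, hg, hgv]; try push_cast; try ring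
      · obtain ⟨m, hw, hgv⟩ := rest
        refine Or.inr (Or.inr (Or.inr (Or.inl ⟨rfl, hQ, m + 1,
          by simp [hw, List.replicate_succ], ?_⟩)))
        simp [Pi.add_apply, hg, hgv]; try push_cast; try ring
      · obtain ⟨m, k, hk, hw, hgv⟩ := rest
        refine Or.inr (Or.inr (Or.inr (Or.inr (Or.inl ⟨rfl, hQ, m + 1, k, hk,
          by simp [hw, List.replicate_succ], ?_⟩))))
        simp [Pi.add_apply, hg, hgv]; try push_cast; try ring
      · obtain ⟨k, hw, hgv⟩ := rest
        refine Or.inr (Or.inr (Or.inl ⟨rfl, hQ, 0, 0, k + 1, by omega,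
          by simp [hw, List.replicate_succ], ?_⟩))
        simp [Pi.add_apply, hg, hgv]
      · obtain ⟨k, hw, hgv⟩ := rest
        refine Or.inr (Or.inr (Or.inr (Or.inr (Or.inl ⟨rfl, hQ, 0, k + 1, by omega,
          by simp [hw, List.replicate_succ], ?_⟩))))
        simp [Pi.add_apply, hg, hgv]
      · obtain ⟨k, hw, hgv⟩ := rest
        refine Or.inr (Or.inr (Or.inr (Or.inr (Or.inr ⟨rfl, hQ, k + 1,
          by simp [hw, List.replicate_succ], ?_⟩))))
        simp [Pi.add_apply, hg, hgv]

end CtrAux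

namespace CtrAux
open List

def InvE : Fin 3 → Fin 3 → List (Fin 3) → (Fin 1 → ℤ) → Prop := fun p q w g =>
  (p = 0 ∧ q = 0 ∧ ∃ i : ℕ, w = List.replicate i 0 ∧ g 0 = 0) ∨
  (p = 0 ∧ q = 1 ∧ ∃ i j : ℕ, 1 ≤ j ∧ w = List.replicate i 0 ++ List.replicate j 1 ∧
    g 0 = (j : ℤ)) ∨
  (p = 0 ∧ q = 2 ∧ ∃ i j k : ℕ, 1 ≤ k ∧
    w = List.replicate i 0 ++ List.replicate j 1 ++ List.replicate k 2 ∧ g 0 = (j : ℤ) - k) ∨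
  (p = 1 ∧ q = 1 ∧ ∃ j : ℕ, w = List.replicate j 1 ∧ g 0 = (j : ℤ)) ∨
  (p = 1 ∧ q = 2 ∧ ∃ j k : ℕ, 1 ≤ k ∧ w = List.replicate j 1 ++ List.replicate k 2 ∧
    g 0 = (j : ℤ) - k) ∨
  (p = 2 ∧ q = 2 ∧ ∃ k : ℕ, w = List.replicate k 2 ∧ g 0 = -(k : ℤ))

lemma ME_inv {p q : Fin ME.n} {w : List (Fin 3)} {g : Fin 1 → ℤ} (h : ME.Path p q w g) :
    InvE p q w g := by
  induction h with
  | nil q =>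
      fin_cases q
      · exact Or.inl ⟨rfl, rfl, 0, rfl, by simp⟩
      · exact Or.inr (Or.inr (Or.inr (Or.inl ⟨rfl, rfl, 0, rfl, by simp⟩)))
      · exact Or.inr (Or.inr (Or.inr (Or.inr (Or.inr ⟨rfl, rfl, 0, rfl, by simp⟩))))
  | @cons p q r x gE w h he ht ih =>
      unfold ME at he
      simp only [List.mem_cons, List.not_mem_nil, or_false, Prod.mk.injEq, Prod.ext_iff] at he
      rcases he with ⟨hp, ⟨hx, hg⟩, hq⟩ | ⟨hp, ⟨hx, hg⟩, hq⟩ | ⟨hp, ⟨hx, hg⟩, hq⟩ |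
        ⟨hp, ⟨hx, hg⟩, hq⟩ | ⟨hp, ⟨hx, hg⟩, hq⟩ | ⟨hp, ⟨hx, hg⟩, hq⟩ <;>
          subst hp <;> subst hx <;> subst hq <;>
          rcases ih with ⟨hP, hQ, rest⟩ | ⟨hP, hQ, rest⟩ | ⟨hP, hQ, rest⟩ | ⟨hP, hQ, rest⟩ |
            ⟨hP, hQ, rest⟩ | ⟨hP, hQ, rest⟩ <;> first
            | (exact absurd hP (by decide))
            | skip
      · obtain ⟨i, hw, hgv⟩ := rest
        exact Or.inl ⟨rfl, hQ, i + 1, by simp [hw, List.replicate_succ],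
          by simp [Pi.add_apply, hg, hgv]⟩
      · obtain ⟨i, j, hj, hw, hgv⟩ := rest
        refine Or.inr (Or.inl ⟨rfl, hQ, i + 1, j, hj, by simp [hw, List.replicate_succ], ?_⟩)
        simp [Pi.add_apply, hg, hgv]
      · obtain ⟨i, j, k, hk, hw, hgv⟩ := rest
        refine Or.inr (Or.inr (Or.inl ⟨rfl, hQ, i + 1, j, k, hk,
          by simp [hw, List.replicate_succ], ?_⟩))
        simp [Pi.add_apply, hg, hgv]
      · obtain ⟨j, hw, hgv⟩ := rest
        refine Or.inr (Or.inl ⟨rfl, hQ, 0, j + 1, by omega,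
          by simp [hw, List.replicate_succ], ?_⟩)
        simp [Pi.add_apply, hg, hgv]; try push_cast; try ring
      · obtain ⟨j, k, hk, hw, hgv⟩ := rest
        refine Or.inr (Or.inr (Or.inl ⟨rfl, hQ, 0, j + 1, k, hk,
          by simp [hw, List.replicate_succ], ?_⟩))
        simp [Pi.add_apply, hg, hgv]; try push_cast; try ring
      · obtain ⟨j, hw, hgv⟩ := rest
        refine Or.inr (Or.inr (Or.inr (Or.inl ⟨rfl, hQ, j + 1,
          by simp [hw, List.replicate_succ], ?_⟩)))
        simp [Pi.add_apply, hg, hgv]; try push_cast; try ring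
      · obtain ⟨j, k, hk, hw, hgv⟩ := rest
        refine Or.inr (Or.inr (Or.inr (Or.inr (Or.inl ⟨rfl, hQ, j + 1, k, hk,
          by simp [hw, List.replicate_succ], ?_⟩))))
        simp [Pi.add_apply, hg, hgv]; try push_cast; try ring
      · obtain ⟨k, hw, hgv⟩ := rest
        refine Or.inr (Or.inr (Or.inl ⟨rfl, hQ, 0, 0, k + 1, by omega,
          by simp [hw, List.replicate_succ], ?_⟩))
        simp [Pi.add_apply, hg, hgv]; try push_cast; try ring
      · obtain ⟨k, hw, hgv⟩ := rest
        refine Or.inr (Or.inr (Or.inr (Or.inr (Or.inl ⟨rfl, hQ, 0, k + 1, by omega,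
          by simp [hw, List.replicate_succ], ?_⟩))))
        simp [Pi.add_apply, hg, hgv]; try push_cast; try ring
      · obtain ⟨k, hw, hgv⟩ := rest
        refine Or.inr (Or.inr (Or.inr (Or.inr (Or.inr ⟨rfl, hQ, k + 1,
          by simp [hw, List.replicate_succ], ?_⟩))))
        simp [Pi.add_apply, hg, hgv]; try push_cast; try ring

lemma path_step {A : Type} {M : ZkAut A 1} {p q r : Fin M.n} {a : A} {w : List A}
    {z : ℤ} {h : Fin 1 → ℤ} (he : (p, (some a, fun _ => z), q) ∈ M.edges)
    (ht : M.Path q r w h) : M.Path p r (a :: w) ((fun _ => z) + h) := by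
  simpa using ZkAut.Path.cons he ht

lemma D_accept (m n : ℕ) :
    MD.Accepts (List.replicate n 0 ++ List.replicate n 1 ++ List.replicate m 2) := by
  cases n with
  | zero =>
      cases m with
      | zero => exact ⟨(0 : Fin 3), trivial, ZkAut.Path.nil (M := MD) (Fin.mk 0 (by simp [MD]))⟩
      | succ m' =>
          refine ⟨(2 : Fin 3), trivial, ?_⟩
          have hp := path_step (M := MD) (by unfold MD; simp :
              ((0 : Fin 3), ((some 2 : Option (Fin 3)), fun _ => (0:ℤ)), (2 : Fin 3)) ∈ MD.edges)
            (path_loop (M := MD) (p := (2 : Fin 3)) (a := (2 : Fin 3)) (z := 0)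
              (by unfold MD; simp) m')
          have hweq : List.replicate 0 (0 : Fin 3) ++ List.replicate 0 (1 : Fin 3)
              ++ List.replicate (m' + 1) (2 : Fin 3) = 2 :: List.replicate m' 2 := by
            simp [List.replicate_succ]
          have hgeq : (0 : Fin 1 → ℤ) = ((fun _ => (0:ℤ)) + fun _ => (m' : ℤ) * 0) := by
            funext i; simp [Pi.add_apply]
          rw [hweq, hgeq]
          exact hp
  | succ n' =>
      have p1 := path_loop (M := MD) (p := (0 : Fin 3)) (a := (0 : Fin 3)) (z := 1)
        (by unfold MD; simp) (n' + 1)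
      have p2 := path_step (M := MD) (by unfold MD; simp :
          ((0 : Fin 3), ((some 1 : Option (Fin 3)), fun _ => (-1:ℤ)), (1 : Fin 3)) ∈ MD.edges)
        (path_loop (M := MD) (p := (1 : Fin 3)) (a := (1 : Fin 3)) (z := -1) (by unfold MD; simp) n')
      cases m with
      | zero =>
          refine ⟨(1 : Fin 3), trivial, ?_⟩
          have hp := path_append p1 p2
          have hweq : List.replicate (n' + 1) (0 : Fin 3) ++ List.replicate (n' + 1) (1 : Fin 3)
              ++ List.replicate 0 (2 : Fin 3)
              = List.replicate (n' + 1) (0 : Fin 3) ++ (1 :: List.replicate n' 1) := by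
            simp [List.replicate_succ]
          have hgeq : (0 : Fin 1 → ℤ) = ((fun _ => ((n' + 1 : ℕ) : ℤ) * 1)
              + ((fun _ => (-1:ℤ)) + fun _ => (n' : ℤ) * -1)) := by
            funext i; simp [Pi.add_apply]
          rw [hweq, hgeq]
          exact hp
      | succ m' =>
          refine ⟨(2 : Fin 3), trivial, ?_⟩
          have p3 := path_step (M := MD) (by unfold MD; simp :
              ((1 : Fin 3), ((some 2 : Option (Fin 3)), fun _ => (0:ℤ)), (2 : Fin 3)) ∈ MD.edges)
            (path_loop (M := MD) (p := (2 : Fin 3)) (a := (2 : Fin 3)) (z := 0) (by unfold MD; simp) m')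
          have hp := path_append p1 (path_append p2 p3)
          have hweq : List.replicate (n' + 1) (0 : Fin 3) ++ List.replicate (n' + 1) (1 : Fin 3)
              ++ List.replicate (m' + 1) (2 : Fin 3)
              = List.replicate (n' + 1) (0 : Fin 3)
                ++ ((1 :: List.replicate n' 1) ++ (2 :: List.replicate m' 2)) := by
            simp [List.replicate_succ]
          have hgeq : (0 : Fin 1 → ℤ) = ((fun _ => ((n' + 1 : ℕ) : ℤ) * 1)
              + (((fun _ => (-1:ℤ)) + fun _ => (n' : ℤ) * -1)
                + ((fun _ => (0:ℤ)) + fun _ => (m' : ℤ) * 0))) := by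
            funext i; simp [Pi.add_apply]
          rw [hweq, hgeq]
          exact hp

lemma E_accept (m n : ℕ) :
    ME.Accepts (List.replicate m 0 ++ List.replicate n 1 ++ List.replicate n 2) := by
  cases n with
  | zero =>
      refine ⟨(0 : Fin 3), trivial, ?_⟩
      have hp := path_loop (M := ME) (p := (0 : Fin 3)) (a := (0 : Fin 3)) (z := 0)
        (by unfold ME; simp) m
      have hweq : List.replicate m (0 : Fin 3) ++ List.replicate 0 (1 : Fin 3)
          ++ List.replicate 0 (2 : Fin 3) = List.replicate m (0 : Fin 3) := by simp
      have hgeq : (0 : Fin 1 → ℤ) = (fun _ => (m : ℤ) * 0) := by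
        funext i; simp
      rw [hweq, hgeq]
      exact hp
  | succ n' =>
      refine ⟨(2 : Fin 3), trivial, ?_⟩
      have p1 := path_loop (M := ME) (p := (0 : Fin 3)) (a := (0 : Fin 3)) (z := 0)
        (by unfold ME; simp) m
      have p2 := path_step (M := ME) (by unfold ME; simp :
          ((0 : Fin 3), ((some 1 : Option (Fin 3)), fun _ => (1:ℤ)), (1 : Fin 3)) ∈ ME.edges)
        (path_loop (M := ME) (p := (1 : Fin 3)) (a := (1 : Fin 3)) (z := 1) (by unfold ME; simp) n')
      have p3 := path_step (M := ME) (by unfold ME; simp :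
          ((1 : Fin 3), ((some 2 : Option (Fin 3)), fun _ => (-1:ℤ)), (2 : Fin 3)) ∈ ME.edges)
        (path_loop (M := ME) (p := (2 : Fin 3)) (a := (2 : Fin 3)) (z := -1) (by unfold ME; simp) n')
      have hp := path_append p1 (path_append p2 p3)
      have hweq : List.replicate m (0 : Fin 3) ++ List.replicate (n' + 1) (1 : Fin 3)
          ++ List.replicate (n' + 1) (2 : Fin 3)
          = List.replicate m (0 : Fin 3)
            ++ ((1 :: List.replicate n' 1) ++ (2 :: List.replicate n' 2)) := by
        simp [List.replicate_succ]
      have hgeq : (0 : Fin 1 → ℤ) = ((fun _ => (m : ℤ) * 0)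
          + (((fun _ => (1:ℤ)) + fun _ => (n' : ℤ) * 1)
            + ((fun _ => (-1:ℤ)) + fun _ => (n' : ℤ) * -1))) := by
        funext i; simp [Pi.add_apply]; push_cast; ring
      rw [hweq, hgeq]
      exact hp

end CtrAux

namespace CtrAux
open List

lemma D_iff (w : List (Fin 3)) :
    (∃ m n : ℕ, w = List.replicate n 0 ++ List.replicate n 1 ++ List.replicate m 2)
      ↔ MD.Accepts w := by
  constructor
  · rintro ⟨m, n, rfl⟩; exact D_accept m n
  · rintro ⟨q, -, hp⟩
    have hI := MD_inv hp
    rcases hI with ⟨hP, hQ, n, hw, hgv⟩ | ⟨hP, hQ, n, m, hm, hw, hgv⟩ |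
      ⟨hP, hQ, n, m, k, hk, hw, hgv⟩ | ⟨hP, hQ, rest⟩ | ⟨hP, hQ, rest⟩ | ⟨hP, hQ, rest⟩
    · have hn : n = 0 := by simp at hgv; omega
      subst hn
      exact ⟨0, 0, by simpa using hw⟩
    · have hnm : n = m := by simp at hgv; omega
      subst hnm
      exact ⟨0, n, by simpa using hw⟩
    · have hnm : n = m := by simp at hgv; omega
      subst hnm
      exact ⟨k, n, hw⟩
    · exact absurd hP (by unfold MD; simp)
    · exact absurd hP (by unfold MD; simp)
    · exact absurd hP (by unfold MD; simp)

lemma E_iff (w : List (Fin 3)) :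
    (∃ m n : ℕ, w = List.replicate m 0 ++ List.replicate n 1 ++ List.replicate n 2)
      ↔ ME.Accepts w := by
  constructor
  · rintro ⟨m, n, rfl⟩; exact E_accept m n
  · rintro ⟨q, -, hp⟩
    have hI := ME_inv hp
    rcases hI with ⟨hP, hQ, i, hw, hgv⟩ | ⟨hP, hQ, i, j, hj, hw, hgv⟩ |
      ⟨hP, hQ, i, j, k, hk, hw, hgv⟩ | ⟨hP, hQ, rest⟩ | ⟨hP, hQ, rest⟩ | ⟨hP, hQ, rest⟩
    · exact ⟨i, 0, by simpa using hw⟩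
    · have : (0 : ℤ) = (j : ℤ) := by simpa using hgv
      omega
    · have hjk : j = k := by simp at hgv; omega
      subst hjk
      exact ⟨i, j, hw⟩
    · exact absurd hP (by unfold ME; simp)
    · exact absurd hP (by unfold ME; simp)
    · exact absurd hP (by unfold ME; simp)

end CtrAux

theorem one_counter_not_closed_under_intersection :
    let D : Language (Fin 3) :=
      {w | ∃ m n : ℕ, w = List.replicate n 0 ++ List.replicate n 1 ++ List.replicate m 2}
    let E : Language (Fin 3) :=
      {w | ∃ m n : ℕ, w = List.replicate m 0 ++ List.replicate n 1 ++ List.replicate n 2}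
    IsCounterLang 1 D ∧ IsCounterLang 1 E ∧
      D ⊓ E = {w | ∃ n : ℕ, w = List.replicate n 0 ++ List.replicate n 1 ++ List.replicate n 2} ∧
      ¬ IsCounterLang 1 (D ⊓ E) := by
  intro D E
  have hDE : D ⊓ E
      = {w | ∃ n : ℕ, w = List.replicate n 0 ++ List.replicate n 1 ++ List.replicate n 2} := by
    ext w
    constructor
    · rintro ⟨⟨m1, n1, h1⟩, ⟨m2, n2, h2⟩⟩
      have heq := h1.symm.trans h2
      have c0 := congrArg (List.count (0 : Fin 3)) heq
      have c1 := congrArg (List.count (1 : Fin 3)) heq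
      have c2 := congrArg (List.count (2 : Fin 3)) heq
      simp [List.count_append, List.count_replicate] at c0 c1 c2
      refine ⟨n1, ?_⟩
      rw [h1]
      have : m1 = n1 := by omega
      rw [this]
    · rintro ⟨n, rfl⟩
      exact ⟨⟨n, n, rfl⟩, ⟨n, n, rfl⟩⟩
  refine ⟨⟨CtrAux.MD, fun w => CtrAux.D_iff w⟩, ⟨CtrAux.ME, fun w => CtrAux.E_iff w⟩, hDE, ?_⟩
  rw [hDE]
  exact CtrAux.main_neg
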